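/- Gauge transformations of twisting pairs: let R ∈ End(V⊗V) be an invertible solution of the Yang–Baxter equation and (Ω², Ω³) = (F, G) a twisting pair for R with twisted matrix R̃ = τ(F)⁻¹ R F. Let u¹ ∈ End(V) be invertible, u² ∈ End(V⊗V) invertible and R-symmetric (i.e. R u² = τ(u²) R, equivalently u² commutes with the braid matrix P R), and u³ ∈ End(V⊗V⊗V) invertible and R-symmetric (i.e. R_{i,i+1} u³ = τ_{i,i+1}(u³) R_{i,i+1} for i = 1, 2). Then (u² F (u¹⊗u¹), u³ G (u¹⊗u¹⊗u¹)) is again a twisting pair for R, and its associated twisted R-matrix is (u¹⊗u¹)⁻¹ R̃ (u¹⊗u¹). -/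
import Mathlib


open TensorProduct

noncomputable section
variable (k V : Type*) [Field k] [AddCommGroup V] [Module k V]

/-- The flip `P : V ⊗ V → V ⊗ V`. -/
def flipE : Module.End k (V ⊗[k] V) := (TensorProduct.comm k V V).toLinearMap

/-- `τ(X) = P X P`. -/
def tauE (X : Module.End k (V ⊗[k] V)) : Module.End k (V ⊗[k] V) :=
  flipE k V * X * flipE k V

/-- The embedding `X ↦ X₂₃` into `End(V ⊗ V ⊗ V)`. -/
def leg23 (X : Module.End k (V ⊗[k] V)) : Module.End k (V ⊗[k] (V ⊗[k] V)) :=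
  LinearMap.lTensor V X

/-- The embedding `X ↦ X₁₂` into `End(V ⊗ V ⊗ V)`. -/
def leg12 (X : Module.End k (V ⊗[k] V)) : Module.End k (V ⊗[k] (V ⊗[k] V)) :=
  (TensorProduct.assoc k V V V).toLinearMap ∘ₗ LinearMap.rTensor V X ∘ₗ
    (TensorProduct.assoc k V V V).symm.toLinearMap

/-- The flip of factors 1 and 2. -/
def P12 : Module.End k (V ⊗[k] (V ⊗[k] V)) := leg12 k V (flipE k V)

/-- The flip of factors 2 and 3. -/
def P23 : Module.End k (V ⊗[k] (V ⊗[k] V)) := leg23 k V (flipE k V)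

/-- The embedding `X ↦ X₁₃`. -/
def leg13 (X : Module.End k (V ⊗[k] V)) : Module.End k (V ⊗[k] (V ⊗[k] V)) :=
  P23 k V * leg12 k V X * P23 k V

/-- The Yang–Baxter equation `R₁₂R₁₃R₂₃ = R₂₃R₁₃R₁₂`. -/
def YB (R : Module.End k (V ⊗[k] V)) : Prop :=
  leg12 k V R * leg13 k V R * leg23 k V R = leg23 k V R * leg13 k V R * leg12 k V R

/-- `(F, G)` (with given two-sided inverses `F'`, `G'`) is a *twisting pair* for `R`:
`Φ := G F₁₂⁻¹` and `Ψ := G F₂₃⁻¹` satisfy `R₁₂ Φ = Φ^{(213)} R₁₂` and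
`R₂₃ Ψ = Ψ^{(132)} R₂₃`. -/
def TwistingPair (R F F' : Module.End k (V ⊗[k] V))
    (G G' : Module.End k (V ⊗[k] (V ⊗[k] V))) : Prop :=
  F * F' = 1 ∧ F' * F = 1 ∧ G * G' = 1 ∧ G' * G = 1 ∧
  leg12 k V R * (G * leg12 k V F') =
    (P12 k V * (G * leg12 k V F') * P12 k V) * leg12 k V R ∧
  leg23 k V R * (G * leg23 k V F') =
    (P23 k V * (G * leg23 k V F') * P23 k V) * leg23 k V R

-- third-factor and first-factor embeddings
def leg3 (u : Module.End k V) : Module.End k (V ⊗[k] (V ⊗[k] V)) :=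
  LinearMap.lTensor V (LinearMap.lTensor V u)

def leg1 (u : Module.End k V) : Module.End k (V ⊗[k] (V ⊗[k] V)) :=
  LinearMap.rTensor (V ⊗[k] V) u

section Aux2
variable {k V}

lemma flipE_sq : flipE k V * flipE k V = 1 := by
  ext x y
  simp [flipE, Module.End.mul_apply]

lemma leg12_mul (X Y : Module.End k (V ⊗[k] V)) :
    leg12 k V (X * Y) = leg12 k V X * leg12 k V Y := by
  simp only [leg12, Module.End.mul_eq_comp, LinearMap.rTensor_comp]
  ext t
  simp [LinearMap.rTensor]

lemma leg23_mul (X Y : Module.End k (V ⊗[k] V)) :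
    leg23 k V (X * Y) = leg23 k V X * leg23 k V Y := by
  simp only [leg23, Module.End.mul_eq_comp, LinearMap.lTensor_comp]

lemma leg12_one : leg12 k V 1 = 1 := by
  simp only [leg12]
  ext t
  simp [LinearMap.rTensor, show (1 : Module.End k (V ⊗[k] V)) = LinearMap.id from rfl]

lemma leg23_one : leg23 k V 1 = 1 := by
  simp only [leg23, show (1 : Module.End k (V ⊗[k] V)) = LinearMap.id from rfl,
    LinearMap.lTensor_id]
  rfl


-- conjugation by the associator
lemma assocConj_of_comm {A : Module.End k (V ⊗[k] (V ⊗[k] V))}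
    {B : Module.End k ((V ⊗[k] V) ⊗[k] V)}
    (h : A ∘ₗ (TensorProduct.assoc k V V V).toLinearMap =
      (TensorProduct.assoc k V V V).toLinearMap ∘ₗ B) :
    A = (TensorProduct.assoc k V V V).toLinearMap ∘ₗ B ∘ₗ
      (TensorProduct.assoc k V V V).symm.toLinearMap := by
  apply LinearMap.ext; intro t
  have := DFunLike.congr_fun h ((TensorProduct.assoc k V V V).symm t)
  simpa using this

lemma assocConj_mul (B C : Module.End k ((V ⊗[k] V) ⊗[k] V)) :
    ((TensorProduct.assoc k V V V).toLinearMap ∘ₗ B ∘ₗ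
      (TensorProduct.assoc k V V V).symm.toLinearMap) *
    ((TensorProduct.assoc k V V V).toLinearMap ∘ₗ C ∘ₗ
      (TensorProduct.assoc k V V V).symm.toLinearMap) =
    (TensorProduct.assoc k V V V).toLinearMap ∘ₗ (B * C) ∘ₗ
      (TensorProduct.assoc k V V V).symm.toLinearMap := by
  apply LinearMap.ext; intro t
  simp [Module.End.mul_apply]

lemma leg3_eq (u : Module.End k V) :
    leg3 k V u = (TensorProduct.assoc k V V V).toLinearMap ∘ₗ
      LinearMap.lTensor (V ⊗[k] V) u ∘ₗ (TensorProduct.assoc k V V V).symm.toLinearMap := by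
  apply assocConj_of_comm
  have h := TensorProduct.map_map_comp_assoc_eq (R := k)
    (LinearMap.id : V →ₗ[k] V) (LinearMap.id : V →ₗ[k] V) u
  simp only [TensorProduct.map_id] at h
  exact h

lemma leg3_leg12_comm (u : Module.End k V) (X : Module.End k (V ⊗[k] V)) :
    leg3 k V u * leg12 k V X = leg12 k V X * leg3 k V u := by
  rw [leg3_eq, leg12, assocConj_mul, assocConj_mul]
  have : LinearMap.lTensor (V ⊗[k] V) u * LinearMap.rTensor V X =
      LinearMap.rTensor V X * LinearMap.lTensor (V ⊗[k] V) u := by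
    show LinearMap.lTensor (V ⊗[k] V) u ∘ₗ LinearMap.rTensor V X =
      LinearMap.rTensor V X ∘ₗ LinearMap.lTensor (V ⊗[k] V) u
    rw [LinearMap.lTensor_comp_rTensor, LinearMap.rTensor_comp_lTensor]
  rw [this]

lemma leg1_leg23_comm (u : Module.End k V) (X : Module.End k (V ⊗[k] V)) :
    leg1 k V u * leg23 k V X = leg23 k V X * leg1 k V u := by
  show LinearMap.rTensor (V ⊗[k] V) u ∘ₗ LinearMap.lTensor V X =
    LinearMap.lTensor V X ∘ₗ LinearMap.rTensor (V ⊗[k] V) u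
  rw [LinearMap.rTensor_comp_lTensor, LinearMap.lTensor_comp_rTensor]

lemma leg3_mul (u v : Module.End k V) : leg3 k V (u * v) = leg3 k V u * leg3 k V v := by
  simp only [leg3, Module.End.mul_eq_comp, LinearMap.lTensor_comp]

lemma leg1_mul (u v : Module.End k V) : leg1 k V (u * v) = leg1 k V u * leg1 k V v := by
  simp only [leg1, Module.End.mul_eq_comp, LinearMap.rTensor_comp]

lemma leg3_one : leg3 k V 1 = 1 := by
  show LinearMap.lTensor V (LinearMap.lTensor V LinearMap.id) = LinearMap.id
  rw [LinearMap.lTensor_id, LinearMap.lTensor_id]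

lemma leg1_one : leg1 k V 1 = 1 := by
  show LinearMap.rTensor (V ⊗[k] V) LinearMap.id = LinearMap.id
  rw [LinearMap.rTensor_id]

lemma U_decomp12 (u : Module.End k V) :
    TensorProduct.map u (TensorProduct.map u u) =
      leg12 k V (TensorProduct.map u u) * leg3 k V u := by
  rw [leg3_eq, leg12, assocConj_mul]
  apply assocConj_of_comm
  have h := TensorProduct.map_map_comp_assoc_eq (R := k) u u u
  rw [h]
  congr 1
  exact (LinearMap.rTensor_comp_lTensor _ _ _).symm

lemma U_decomp23 (u : Module.End k V) :
    TensorProduct.map u (TensorProduct.map u u) =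
      leg23 k V (TensorProduct.map u u) * leg1 k V u := by
  show _ = LinearMap.lTensor V (TensorProduct.map u u) ∘ₗ LinearMap.rTensor (V ⊗[k] V) u
  rw [LinearMap.lTensor_comp_rTensor]

lemma tauE_map (a b : Module.End k V) :
    tauE k V (TensorProduct.map a b) = TensorProduct.map b a := by
  simp only [tauE, flipE, Module.End.mul_eq_comp]
  ext x y
  simp

lemma map_mul₂ (a b c d : Module.End k V) :
    TensorProduct.map a b * TensorProduct.map c d = TensorProduct.map (a * c) (b * d) := by
  simp only [Module.End.mul_eq_comp, TensorProduct.map_comp]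

lemma map_one₂ : TensorProduct.map (1 : Module.End k V) (1 : Module.End k V) = 1 := by
  show TensorProduct.map LinearMap.id LinearMap.id = LinearMap.id
  rw [TensorProduct.map_id]

lemma map_one₃ : TensorProduct.map (1 : Module.End k V)
    (TensorProduct.map (1 : Module.End k V) (1 : Module.End k V)) = 1 := by
  rw [map_one₂]
  show TensorProduct.map LinearMap.id LinearMap.id = LinearMap.id
  rw [TensorProduct.map_id]

section MonoidAux
variable {M : Type*} [Monoid M]

lemma cancel_left {a b : M} (h : a * b = 1) : ∀ x : M, a * (b * x) = x :=
  fun x => by rw [← mul_assoc, h, one_mul]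

lemma push2 {a b c d : M} (h : a * b = c * d) : ∀ x : M, a * (b * x) = c * (d * x) :=
  fun x => by rw [← mul_assoc, h, mul_assoc]

lemma push4 {R P u : M} (h : R * u = P * u * P * R) :
    ∀ x : M, R * (u * x) = P * (u * (P * (R * x))) :=
  fun x => by rw [← mul_assoc, h]; simp only [mul_assoc]

lemma mid_inv {a b c a' b' c' : M} (h1 : c * c' = 1) (h2 : b * b' = 1)
    (h3 : a * a' = 1) : (a * b * c) * (c' * b' * a') = 1 := by
  simp only [mul_assoc]
  rw [cancel_left h1, cancel_left h2, h3]

lemma sym_inv {R P u u' : M} (hP : P * P = 1)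
    (huu' : u * u' = 1) (hu'u : u' * u = 1)
    (h : R * u = P * u * P * R) : R * u' = P * u' * P * R := by
  have key : P * u' * P * R = R * u' := by
    calc P * u' * P * R = P * u' * P * R * (u * u') := by rw [huu', mul_one]
      _ = R * u' := by
        simp only [mul_assoc]
        rw [push4 h, cancel_left hP, cancel_left hu'u, cancel_left hP]
  exact key.symm

lemma gauge_aux {R P u φ w v : M} (hP : P * P = 1)
    (hu : R * u = P * u * P * R) (hφ : R * φ = P * φ * P * R)
    (hw : R * w = P * w * P * R) (hv1 : R * v = v * R) (hv2 : P * v = v * P) :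
    R * (u * φ * w * v) = P * (u * φ * w * v) * P * R := by
  simp only [mul_assoc]
  rw [push4 hu, push4 hφ, cancel_left hP, push4 hw, cancel_left hP, hv1, push2 hv2]
end MonoidAux

lemma cancel_left' {M : Type*} [Monoid M] {a b c : M} (h : a * b = c) :
    ∀ x : M, a * (b * x) = c * x := fun x => by rw [← mul_assoc, h]

lemma mapW_mul {W : Type*} [AddCommGroup W] [Module k W]
    (a c : Module.End k V) (b d : Module.End k W) :
    TensorProduct.map a b * TensorProduct.map c d = TensorProduct.map (a * c) (b * d) := by
  simp only [Module.End.mul_eq_comp, TensorProduct.map_comp]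

lemma mapW_one {W : Type*} [AddCommGroup W] [Module k W] :
    TensorProduct.map (1 : Module.End k V) (1 : Module.End k W) = 1 := by
  show TensorProduct.map LinearMap.id LinearMap.id = LinearMap.id
  rw [TensorProduct.map_id]

lemma tauE_mul (X Y : Module.End k (V ⊗[k] V)) :
    tauE k V (X * Y) = tauE k V X * tauE k V Y := by
  simp only [tauE, mul_assoc]
  rw [cancel_left flipE_sq]

lemma P12_sq : P12 k V * P12 k V = 1 := by
  rw [P12, ← leg12_mul, flipE_sq, leg12_one]

lemma P23_sq : P23 k V * P23 k V = 1 := by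
  rw [P23, ← leg23_mul, flipE_sq, leg23_one]


end Aux2

/-- gauge transformations of twisting pairs: if `(F, G)` is a twisting
pair for `R` with `R̃ = τ(F)⁻¹ R F`, `u¹ ∈ End(V)` is invertible, `u² ∈ End(V⊗V)` is
invertible and `R`-symmetric, and `u³ ∈ End(V⊗V⊗V)` is invertible and `R`-symmetric,
then `(u² F (u¹⊗u¹), u³ G (u¹⊗u¹⊗u¹))` is again a twisting pair for `R`, whose
twisted matrix is `(u¹⊗u¹)⁻¹ R̃ (u¹⊗u¹)`. -/
theorem twistingPair_gauge [FiniteDimensional k V]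
    (R R' F F' : Module.End k (V ⊗[k] V))
    (G G' : Module.End k (V ⊗[k] (V ⊗[k] V)))
    (u₁ u₁' : Module.End k V)
    (u₂ u₂' : Module.End k (V ⊗[k] V))
    (u₃ u₃' : Module.End k (V ⊗[k] (V ⊗[k] V)))
    (hR : R * R' = 1) (hR' : R' * R = 1)
    (hYB : YB k V R)
    (hTP : TwistingPair k V R F F' G G')
    (hu₁ : u₁ * u₁' = 1) (hu₁' : u₁' * u₁ = 1)
    (hu₂ : u₂ * u₂' = 1) (hu₂' : u₂' * u₂ = 1)
    (hu₃ : u₃ * u₃' = 1) (hu₃' : u₃' * u₃ = 1)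
    (hu₂sym : R * u₂ = tauE k V u₂ * R)
    (hu₃sym12 : leg12 k V R * u₃ = (P12 k V * u₃ * P12 k V) * leg12 k V R)
    (hu₃sym23 : leg23 k V R * u₃ = (P23 k V * u₃ * P23 k V) * leg23 k V R) :
    TwistingPair k V R
      (u₂ * F * TensorProduct.map u₁ u₁)
      (TensorProduct.map u₁' u₁' * F' * u₂')
      (u₃ * G * TensorProduct.map u₁ (TensorProduct.map u₁ u₁))
      (TensorProduct.map u₁' (TensorProduct.map u₁' u₁') * G' * u₃') ∧
    tauE k V (TensorProduct.map u₁' u₁' * F' * u₂') * R *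
        (u₂ * F * TensorProduct.map u₁ u₁) =
      TensorProduct.map u₁' u₁' * (tauE k V F' * R * F) * TensorProduct.map u₁ u₁ := by
  obtain ⟨hFF, hF'F, hGG, hG'G, hTw12, hTw23⟩ := hTP
  -- abbreviations
  have hA : TensorProduct.map u₁ u₁ * TensorProduct.map u₁' u₁' = 1 := by
    rw [mapW_mul, hu₁, mapW_one]
  have hA' : TensorProduct.map u₁' u₁' * TensorProduct.map u₁ u₁ = 1 := by
    rw [mapW_mul, hu₁', mapW_one]
  have hU : TensorProduct.map u₁ (TensorProduct.map u₁ u₁) *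
      TensorProduct.map u₁' (TensorProduct.map u₁' u₁') = 1 := by
    rw [mapW_mul, hu₁, hA, mapW_one]
  have hU' : TensorProduct.map u₁' (TensorProduct.map u₁' u₁') *
      TensorProduct.map u₁ (TensorProduct.map u₁ u₁) = 1 := by
    rw [mapW_mul, hu₁', hA', mapW_one]
  have hu₂f : R * u₂ = flipE k V * u₂ * flipE k V * R := by rw [hu₂sym, tauE]
  have hRu₂' : R * u₂' = flipE k V * u₂' * flipE k V * R :=
    sym_inv flipE_sq hu₂ hu₂' hu₂f
  have h12w : leg12 k V R * leg12 k V u₂' =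
      P12 k V * leg12 k V u₂' * P12 k V * leg12 k V R := by
    have h := congrArg (leg12 k V) hRu₂'
    simp only [leg12_mul] at h
    simpa only [P12] using h
  have h23w : leg23 k V R * leg23 k V u₂' =
      P23 k V * leg23 k V u₂' * P23 k V * leg23 k V R := by
    have h := congrArg (leg23 k V) hRu₂'
    simp only [leg23_mul] at h
    simpa only [P23] using h
  have hUA12 : TensorProduct.map u₁ (TensorProduct.map u₁ u₁) *
      leg12 k V (TensorProduct.map u₁' u₁') = leg3 k V u₁ := by
    rw [U_decomp12, mul_assoc, leg3_leg12_comm, ← mul_assoc, ← leg12_mul, hA,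
      leg12_one, one_mul]
  have hUA23 : TensorProduct.map u₁ (TensorProduct.map u₁ u₁) *
      leg23 k V (TensorProduct.map u₁' u₁') = leg1 k V u₁ := by
    rw [U_decomp23, mul_assoc, leg1_leg23_comm, ← mul_assoc, ← leg23_mul, hA,
      leg23_one, one_mul]
  have hprod12 : (u₃ * G * TensorProduct.map u₁ (TensorProduct.map u₁ u₁)) *
      leg12 k V (TensorProduct.map u₁' u₁' * F' * u₂') =
      u₃ * (G * leg12 k V F') * leg12 k V u₂' * leg3 k V u₁ := by
    rw [leg12_mul, leg12_mul]
    simp only [mul_assoc]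
    rw [cancel_left' hUA12, push2 (leg3_leg12_comm u₁ F'), leg3_leg12_comm]
  have hprod23 : (u₃ * G * TensorProduct.map u₁ (TensorProduct.map u₁ u₁)) *
      leg23 k V (TensorProduct.map u₁' u₁' * F' * u₂') =
      u₃ * (G * leg23 k V F') * leg23 k V u₂' * leg1 k V u₁ := by
    rw [leg23_mul, leg23_mul]
    simp only [mul_assoc]
    rw [cancel_left' hUA23, push2 (leg1_leg23_comm u₁ F'), leg1_leg23_comm]
  refine ⟨⟨?_, ?_, ?_, ?_, ?_, ?_⟩, ?_⟩
  · exact mid_inv hA hFF hu₂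
  · exact mid_inv hu₂' hF'F hA'
  · exact mid_inv hU hGG hu₃
  · exact mid_inv hu₃' hG'G hU'
  · rw [hprod12]
    exact gauge_aux P12_sq hu₃sym12 hTw12 h12w (leg3_leg12_comm u₁ R).symm
      ((leg3_leg12_comm u₁ (flipE k V)).symm)
  · rw [hprod23]
    exact gauge_aux P23_sq hu₃sym23 hTw23 h23w ((leg1_leg23_comm u₁ R).symm)
      ((leg1_leg23_comm u₁ (flipE k V)).symm)
  · have ht : tauE k V (TensorProduct.map u₁' u₁' * F' * u₂') =
        TensorProduct.map u₁' u₁' * tauE k V F' * tauE k V u₂' := by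
      rw [tauE_mul, tauE_mul, tauE_map]
    have htau' : tauE k V u₂' * R = R * u₂' := by rw [tauE]; exact hRu₂'.symm
    rw [ht]
    simp only [mul_assoc]
    rw [push2 htau', cancel_left hu₂']
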